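/- Let (x, y) be a proper factorisation of a string of O₂ of length greater than 2, with both x and y short. Then either the conjugate of the first letter of x equals the last letter of y, or the last letter of x equals the conjugate of the first letter of y, or there exist nonempty proper prefixes p of x (p ≠ x) and q of y (q ≠ y) such that pq ∈ O₂. -/

import Mathlib

/-- A letter of the alphabet Σₙ: the `i`-th pair, with `true` for `aᵢ`
and `false` for its conjugate `āᵢ`. -/
abbrev Letter (n : ℕ) := Fin n × Bool

/-- A string (word) over Σₙ. -/
abbrev Word (n : ℕ) := List (Letter n)

/-- The conjugate letter. -/
def conj {n : ℕ} (x : Letter n) : Letter n := (x.1, !x.2)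

/-- The balance map μ : Σₙ* → ℤⁿ. -/
def mu {n : ℕ} (w : Word n) : Fin n → ℤ :=
  fun i => (w.count ((i, true) : Letter n) : ℤ) - (w.count ((i, false) : Letter n) : ℤ)

/-- The n-balanced language Oₙ. -/
def OO (n : ℕ) : Set (Word n) :=
  {w | ∀ i : Fin n, w.count ((i, true) : Letter n) = w.count ((i, false) : Letter n)}

/-- A string is short if no conjugate pair of letters both occur in it. -/
def Short {n : ℕ} (w : Word n) : Prop :=
  ∀ i : Fin n, ¬ (((i, true) : Letter n) ∈ w ∧ ((i, false) : Letter n) ∈ w)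

/-- The factor of `p` with indices from `i` to `j` (inclusive). -/
def factor {n : ℕ} (p : Word n) (i j : ℕ) : Word n :=
  (p.drop i).take (j + 1 - i)

/-- `[i, j]` is a bump of `p`: the factor `p[i..j]` is a minimal non-short factor,
i.e. it is not short but all of its ultra-proper factors are short. -/
def IsBump {n : ℕ} (p : Word n) (i j : ℕ) : Prop :=
  i < j ∧ j < p.length ∧ ¬ Short (factor p i j) ∧
    ∀ u l r : Word n, factor p i j = l ++ u ++ r → u ≠ [] → u ≠ factor p i j → Short u

/-- Bal-decomposition of a pair `(z₀, z₁)`: choose proper factorisations of `z₀` and `z₁`,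
and partition all resulting factors into two nonempty lists of length at most 2, each
concatenating to a string of O₂ of length strictly less than `|z₀z₁|`. -/
def BalDecomp (z₀ z₁ : Word 2) : Prop :=
  ∃ f₀ f₁ P Q : List (Word 2),
    f₀.flatten = z₀ ∧ [] ∉ f₀ ∧ f₁.flatten = z₁ ∧ [] ∉ f₁ ∧
    (P ++ Q).Perm (f₀ ++ f₁) ∧
    0 < P.length ∧ P.length ≤ 2 ∧ 0 < Q.length ∧ Q.length ≤ 2 ∧
    P.flatten.length < z₀.length + z₁.length ∧ Q.flatten.length < z₀.length + z₁.length ∧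
    P.flatten ∈ OO 2 ∧ Q.flatten ∈ OO 2

private lemma count_pair_aux {α : Type*} [BEq α] [LawfulBEq α] {l1 l2 : α} (h : l1 ≠ l2) :
    ∀ p : List α, (∀ a ∈ p, a = l1 ∨ a = l2) → p.count l1 + p.count l2 = p.length := by
  intro p hp
  induction p with
  | nil => simp
  | cons a tl ih =>
    have htl : ∀ b ∈ tl, b = l1 ∨ b = l2 := fun b hb => hp b (List.mem_cons_of_mem _ hb)
    have := ih htl
    rcases hp a List.mem_cons_self with rfl | rfl
    · simp [List.count_cons, h, Ne.symm h]
      omega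
    · simp [List.count_cons, h, Ne.symm h]
      omega

private lemma count_singleton_ne {α : Type*} [BEq α] [LawfulBEq α] {a b : α} (h : b ≠ a) :
    [b].count a = 0 := by
  simp [List.count_cons, h]

private lemma walk_pos_aux (f : ℕ → ℤ) (L : ℕ)
    (hstep : ∀ t, f t - 1 ≤ f (t+1) ∧ f (t+1) ≤ f t + 1)
    (hne : ∀ t, 0 < t → t < L → f t ≠ 0) (h1 : f 1 = 1) :
    ∀ t, 1 ≤ t → t < L → 1 ≤ f t := by
  intro t
  induction t with
  | zero => omega
  | succ n ih =>
    intro h1n hnL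
    rcases Nat.lt_or_ge n 1 with h | h
    · have hn : n = 0 := by omega
      subst hn; rw [h1]
    · have hn : 1 ≤ f n := ih h (by omega)
      have h2 := hstep n
      have h3 := hne (n+1) (by omega) hnL
      omega

private lemma main_walk_aux (cx cy : ℕ → ℤ) (L : ℕ) (hL : 2 ≤ L)
    (hcx0 : cx 0 = 0) (hcy0 : cy 0 = 0) (hend : cx L = cy L)
    (hsx : ∀ t, cx t ≤ cx (t+1) ∧ cx (t+1) ≤ cx t + 1)
    (hsy : ∀ t, cy t ≤ cy (t+1) ∧ cy (t+1) ≤ cy t + 1)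
    (hne : ∀ t, 0 < t → t < L → cx t ≠ cy t) :
    (cx 1 = 1 ∧ cy 1 = 0 ∧ cx L = cx (L-1) ∧ cy L = cy (L-1) + 1) ∨
    (cx 1 = 0 ∧ cy 1 = 1 ∧ cx L = cx (L-1) + 1 ∧ cy L = cy (L-1)) := by
  set f : ℕ → ℤ := fun t => cx t - cy t with hf
  have hstep : ∀ t, f t - 1 ≤ f (t+1) ∧ f (t+1) ≤ f t + 1 := by
    intro t; have := hsx t; have := hsy t; simp only [hf]; omega
  have hne' : ∀ t, 0 < t → t < L → f t ≠ 0 := by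
    intro t h1 h2; have := hne t h1 h2; simp only [hf]; omega
  have hx1 := hsx 0; have hy1 := hsy 0
  norm_num at hx1 hy1
  have hf1 : f 1 = 1 ∨ f 1 = -1 := by
    have := hne' 1 one_pos (by omega); simp only [hf] at this ⊢; omega
  have hL1 : L - 1 + 1 = L := by omega
  have hxL := hsx (L-1); have hyL := hsy (L-1)
  rw [hL1] at hxL hyL
  have hfL : f L = 0 := by simp only [hf]; omega
  rcases hf1 with h1 | h1
  · left
    have hpos := walk_pos_aux f L hstep hne' h1 (L-1) (by omega) (by omega)
    simp only [hf] at h1 hpos hfL ⊢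
    omega
  · right
    have h1' : (fun t => -(f t)) 1 = 1 := by simp [h1]
    have hpos := walk_pos_aux (fun t => -(f t)) L
      (fun t => by have := hstep t; omega)
      (fun t a b => by have := hne' t a b; omega) h1' (L-1) (by omega) (by omega)
    simp only [hf] at h1 hpos hfL ⊢
    omega

/-- balance + shortness of both halves: extract the sign structure at index `i`. -/
private lemma sign_aux (x y : Word 2) (hbal : x ++ y ∈ OO 2) (hsy : Short y)
    (i : Fin 2) (s : Bool) (hs : ((i, !s) : Letter 2) ∉ x) :
    y.count ((i, s) : Letter 2) = 0 ∧ x.count ((i, s) : Letter 2) = y.count ((i, !s) : Letter 2) := by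
  have h := hbal i
  rw [List.count_append, List.count_append] at h
  have hx0 : x.count ((i, !s) : Letter 2) = 0 := List.count_eq_zero.mpr hs
  have hyi := hsy i
  have hy0 : y.count ((i, s) : Letter 2) = 0 := by
    by_contra hc
    have h1 : ((i, s) : Letter 2) ∈ y := List.count_pos_iff.mp (Nat.pos_of_ne_zero hc)
    have h1' : 0 < y.count ((i, s) : Letter 2) := Nat.pos_of_ne_zero hc
    have h2 : ((i, !s) : Letter 2) ∈ y := by
      rw [← List.count_pos_iff]
      cases s <;>
        (simp only [Bool.not_true, Bool.not_false] at hx0 h1' ⊢) <;> omega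
    cases s
    · exact hyi ⟨h2, h1⟩
    · exact hyi ⟨h1, h2⟩
  refine ⟨hy0, ?_⟩
  cases s <;>
    (simp only [Bool.not_true, Bool.not_false] at hx0 hy0 ⊢) <;> omega

theorem stmt_11 (x y : Word 2) (hx : x ≠ []) (hy : y ≠ [])
    (hbal : x ++ y ∈ OO 2) (hlen : 2 < (x ++ y).length)
    (hsx : Short x) (hsy : Short y) :
    conj (x.head hx) = y.getLast hy ∨
    x.getLast hx = conj (y.head hy) ∨
    ∃ p q : Word 2, p ≠ [] ∧ p <+: x ∧ p ≠ x ∧ q ≠ [] ∧ q <+: y ∧ q ≠ y ∧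
      p ++ q ∈ OO 2 := by
  -- choose signs so that (0,!sa) ∉ x and (1,!sb) ∉ x
  obtain ⟨sa, hsa⟩ : ∃ s : Bool, (((0 : Fin 2), !s) : Letter 2) ∉ x := by
    by_cases h : (((0 : Fin 2), true) : Letter 2) ∈ x
    · exact ⟨true, fun hf => hsx 0 ⟨h, by simpa using hf⟩⟩
    · exact ⟨false, by simpa using h⟩
  obtain ⟨sb, hsb⟩ : ∃ s : Bool, (((1 : Fin 2), !s) : Letter 2) ∉ x := by
    by_cases h : (((1 : Fin 2), true) : Letter 2) ∈ x
    · exact ⟨true, fun hf => hsx 1 ⟨h, by simpa using hf⟩⟩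
    · exact ⟨false, by simpa using h⟩
  obtain ⟨hyA0, hA0⟩ := sign_aux x y hbal hsy 0 sa hsa
  obtain ⟨hyB0, hB0⟩ := sign_aux x y hbal hsy 1 sb hsb
  have hyA : y.count (((0 : Fin 2), sa) : Letter 2) = 0 := hyA0
  have hA : x.count (((0 : Fin 2), sa) : Letter 2)
      = y.count (((0 : Fin 2), !sa) : Letter 2) := hA0
  have hyB : y.count (((1 : Fin 2), sb) : Letter 2) = 0 := hyB0
  have hB : x.count (((1 : Fin 2), sb) : Letter 2)
      = y.count (((1 : Fin 2), !sb) : Letter 2) := hB0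
  clear hyA0 hA0 hyB0 hB0
  have hxA0 : x.count (((0 : Fin 2), !sa) : Letter 2) = 0 := List.count_eq_zero.mpr hsa
  have hxB0 : x.count (((1 : Fin 2), !sb) : Letter 2) = 0 := List.count_eq_zero.mpr hsb
  have hAB : (((0 : Fin 2), sa) : Letter 2) ≠ ((1 : Fin 2), sb) := by
    intro h
    exact (by decide : ((0 : Fin 2)) ≠ 1) (congrArg Prod.fst h)
  have hAB' : (((0 : Fin 2), !sa) : Letter 2) ≠ ((1 : Fin 2), !sb) := by
    intro h
    exact (by decide : ((0 : Fin 2)) ≠ 1) (congrArg Prod.fst h)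
  -- every letter of x is (0,sa) or (1,sb)
  have hmemx : ∀ a ∈ x, a = (((0 : Fin 2), sa) : Letter 2) ∨ a = ((1 : Fin 2), sb) := by
    rintro ⟨i, c⟩ ha
    fin_cases i
    · left
      by_cases hc : c = sa
      · subst hc; rfl
      · have : c = !sa := by cases c <;> cases sa <;> simp_all
        rw [this] at ha; exact absurd ha hsa
    · right
      by_cases hc : c = sb
      · subst hc; rfl
      · have : c = !sb := by cases c <;> cases sb <;> simp_all
        rw [this] at ha; exact absurd ha hsb
  have hmemy : ∀ a ∈ y, a = (((0 : Fin 2), !sa) : Letter 2) ∨ a = ((1 : Fin 2), !sb) := by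
    rintro ⟨i, c⟩ ha
    have hyA' : (((0 : Fin 2), sa) : Letter 2) ∉ y := List.count_eq_zero.mp hyA
    have hyB' : (((1 : Fin 2), sb) : Letter 2) ∉ y := List.count_eq_zero.mp hyB
    fin_cases i
    · left
      by_cases hc : c = !sa
      · subst hc; rfl
      · have : c = sa := by cases c <;> cases sa <;> simp_all
        rw [this] at ha; exact absurd ha hyA'
    · right
      by_cases hc : c = !sb
      · subst hc; rfl
      · have : c = sb := by cases c <;> cases sb <;> simp_all
        rw [this] at ha; exact absurd ha hyB'
  have hlx : x.count (((0 : Fin 2), sa) : Letter 2)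
      + x.count (((1 : Fin 2), sb) : Letter 2) = x.length := count_pair_aux hAB x hmemx
  have hly : y.count (((0 : Fin 2), !sa) : Letter 2)
      + y.count (((1 : Fin 2), !sb) : Letter 2) = y.length := count_pair_aux hAB' y hmemy
  have hLL : y.length = x.length := by omega
  set L := x.length with hLdef
  have hL2 : 2 ≤ L := by
    rw [List.length_append] at hlen; omega
  -- the walk functions
  set cx : ℕ → ℤ := fun t => ((x.take t).count (((0 : Fin 2), sa) : Letter 2) : ℤ) with hcx
  set cy : ℕ → ℤ := fun t => ((y.take t).count (((0 : Fin 2), !sa) : Letter 2) : ℤ) with hcy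
  by_cases hmid : ∃ t, 0 < t ∧ t < L ∧
      (x.take t).count (((0 : Fin 2), sa) : Letter 2)
        = (y.take t).count (((0 : Fin 2), !sa) : Letter 2)
  · -- middle balanced point: build p, q
    obtain ⟨t, ht0, htL, hteq⟩ := hmid
    right; right
    refine ⟨x.take t, y.take t, ?_, List.take_prefix t x, ?_, ?_, List.take_prefix t y, ?_, ?_⟩
    · intro h; rcases List.take_eq_nil_iff.mp h with h | h
      · omega
      · exact hx h
    · intro h
      have := congrArg List.length h
      rw [List.length_take] at this; omega
    · intro h; rcases List.take_eq_nil_iff.mp h with h | h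
      · omega
      · exact hy h
    · intro h
      have := congrArg List.length h
      rw [List.length_take] at this; omega
    · -- p ++ q ∈ OO 2
      have hplen : (x.take t).length = t := by rw [List.length_take]; omega
      have hqlen : (y.take t).length = t := by rw [List.length_take]; omega
      have hpsub : ∀ a ∈ x.take t, a ∈ x := fun a ha => List.mem_of_mem_take ha
      have hqsub : ∀ a ∈ y.take t, a ∈ y := fun a ha => List.mem_of_mem_take ha
      have hp0 : (x.take t).count (((0 : Fin 2), !sa) : Letter 2) = 0 :=
        List.count_eq_zero.mpr (fun h => hsa (hpsub _ h))
      have hp1 : (x.take t).count (((1 : Fin 2), !sb) : Letter 2) = 0 :=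
        List.count_eq_zero.mpr (fun h => hsb (hpsub _ h))
      have hq0 : (y.take t).count (((0 : Fin 2), sa) : Letter 2) = 0 :=
        List.count_eq_zero.mpr (fun h => (List.count_eq_zero.mp hyA) (hqsub _ h))
      have hq1 : (y.take t).count (((1 : Fin 2), sb) : Letter 2) = 0 :=
        List.count_eq_zero.mpr (fun h => (List.count_eq_zero.mp hyB) (hqsub _ h))
      have hpp : (x.take t).count (((0 : Fin 2), sa) : Letter 2)
          + (x.take t).count (((1 : Fin 2), sb) : Letter 2) = (x.take t).length :=
        count_pair_aux hAB (x.take t) (fun a ha => hmemx a (hpsub a ha))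
      have hqq : (y.take t).count (((0 : Fin 2), !sa) : Letter 2)
          + (y.take t).count (((1 : Fin 2), !sb) : Letter 2) = (y.take t).length :=
        count_pair_aux hAB' (y.take t) (fun a ha => hmemy a (hqsub a ha))
      intro i
      rw [List.count_append, List.count_append]
      fin_cases i
      · show (x.take t).count (((0 : Fin 2), true) : Letter 2)
            + (y.take t).count (((0 : Fin 2), true) : Letter 2)
          = (x.take t).count (((0 : Fin 2), false) : Letter 2)
            + (y.take t).count (((0 : Fin 2), false) : Letter 2)
        cases sa <;> simp_all
      · show (x.take t).count (((1 : Fin 2), true) : Letter 2)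
            + (y.take t).count (((1 : Fin 2), true) : Letter 2)
          = (x.take t).count (((1 : Fin 2), false) : Letter 2)
            + (y.take t).count (((1 : Fin 2), false) : Letter 2)
        have hBt : (x.take t).count (((1 : Fin 2), sb) : Letter 2)
            = (y.take t).count (((1 : Fin 2), !sb) : Letter 2) := by omega
        cases sb <;> simp_all
  · -- no middle balanced point: use the walk lemma
    push_neg at hmid
    have hcx0 : cx 0 = 0 := by simp [hcx]
    have hcy0 : cy 0 = 0 := by simp [hcy]
    have hend : cx L = cy L := by
      have e1 : x.take L = x := by rw [hLdef]; exact List.take_length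
      have e2 : y.take L = y := by rw [show L = y.length from hLL.symm]; exact List.take_length
      simp only [hcx, hcy, e1, e2]
      exact_mod_cast hA
    have hsxs : ∀ t, cx t ≤ cx (t+1) ∧ cx (t+1) ≤ cx t + 1 := by
      intro t
      have h1 : (x.take (t+1)).count (((0 : Fin 2), sa) : Letter 2)
          = (x.take t).count (((0 : Fin 2), sa) : Letter 2)
            + (x[t]?.toList).count (((0 : Fin 2), sa) : Letter 2) := by
        rw [List.take_succ, List.count_append]
      have h2 : (x[t]?.toList).count (((0 : Fin 2), sa) : Letter 2) ≤ 1 :=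
        le_trans (List.count_le_length) (by cases x[t]? <;> simp)
      simp only [hcx]
      push_cast [h1]
      omega
    have hsys : ∀ t, cy t ≤ cy (t+1) ∧ cy (t+1) ≤ cy t + 1 := by
      intro t
      have h1 : (y.take (t+1)).count (((0 : Fin 2), !sa) : Letter 2)
          = (y.take t).count (((0 : Fin 2), !sa) : Letter 2)
            + (y[t]?.toList).count (((0 : Fin 2), !sa) : Letter 2) := by
        rw [List.take_succ, List.count_append]
      have h2 : (y[t]?.toList).count (((0 : Fin 2), !sa) : Letter 2) ≤ 1 :=
        le_trans (List.count_le_length) (by cases y[t]? <;> simp)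
      simp only [hcy]
      push_cast [h1]
      omega
    have hne : ∀ t, 0 < t → t < L → cx t ≠ cy t := by
      intro t h1 h2 hc
      simp only [hcx, hcy] at hc
      exact hmid t h1 h2 (by exact_mod_cast hc)
    have hL1 : L - 1 < L := by omega
    have hx1 : x.take 1 = [x.head hx] := by
      rw [List.take_one, List.head?_eq_head hx]; rfl
    have hy1 : y.take 1 = [y.head hy] := by
      rw [List.take_one, List.head?_eq_head hy]; rfl
    have hxgl : x[L-1]? = some (x.getLast hx) := by
      rw [List.getLast_eq_getElem hx]
      exact List.getElem?_eq_getElem (by omega)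
    have hygl : y[L-1]? = some (y.getLast hy) := by
      have hidx : L - 1 = y.length - 1 := by omega
      rw [hidx, List.getLast_eq_getElem hy]
      exact List.getElem?_eq_getElem (by omega)
    have hxstep : (x.take L).count (((0 : Fin 2), sa) : Letter 2)
        = (x.take (L-1)).count (((0 : Fin 2), sa) : Letter 2)
          + ([x.getLast hx].count (((0 : Fin 2), sa) : Letter 2)) := by
      conv_lhs => rw [show L = (L-1)+1 by omega]
      rw [List.take_succ, List.count_append, hxgl]
      rfl
    have hystep : (y.take L).count (((0 : Fin 2), !sa) : Letter 2)
        = (y.take (L-1)).count (((0 : Fin 2), !sa) : Letter 2)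
          + ([y.getLast hy].count (((0 : Fin 2), !sa) : Letter 2)) := by
      conv_lhs => rw [show L = (L-1)+1 by omega]
      rw [List.take_succ, List.count_append, hygl]
      rfl
    rcases main_walk_aux cx cy L hL2 hcx0 hcy0 hend hsxs hsys hne with
      ⟨h1, h2, h3, h4⟩ | ⟨h1, h2, h3, h4⟩
    · -- x.head = (0,sa), y.getLast = (0,!sa)
      left
      have hh : x.head hx = ((0 : Fin 2), sa) := by
        simp only [hcx, hx1] at h1
        by_contra hc
        rw [count_singleton_ne hc] at h1
        norm_num at h1
      have hl : y.getLast hy = ((0 : Fin 2), !sa) := by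
        simp only [hcy] at h4
        rw [hystep] at h4
        by_contra hc
        rw [count_singleton_ne hc] at h4
        norm_num at h4
      rw [hh, hl]; rfl
    · -- y.head = (0,!sa), x.getLast = (0,sa)
      right; left
      have hh : y.head hy = ((0 : Fin 2), !sa) := by
        simp only [hcy, hy1] at h2
        by_contra hc
        rw [count_singleton_ne hc] at h2
        norm_num at h2
      have hl : x.getLast hx = ((0 : Fin 2), sa) := by
        simp only [hcx] at h3
        rw [hxstep] at h3
        by_contra hc
        rw [count_singleton_ne hc] at h3
        norm_num at h3
      rw [hh, hl]; simp [conj]
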